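/- Fix positive integers n and k. If there exists a riwi-map χ : F'_{n,k} → F'_{n,k}, then there exists a bijection between F'_{n,k,0} (the aperiodic (n,k)-codes with weighted sum 0) and N'_{n,k} (the set of rotation-classes of aperiodic (n,k)-codes). -/

import Mathlib

open Finset

/-- An `(n,k)`-code: `f : ZMod n → ℕ` with total sum `k`. -/
def IsCode (n : ℕ) [NeZero n] (k : ℕ) (f : ZMod n → ℕ) : Prop :=
  ∑ i : ZMod n, f i = k

/-- The weighted sum `W(f) = ∑ i · f(i)` in `ZMod n`. -/
def wsum (n : ℕ) [NeZero n] (f : ZMod n → ℕ) : ZMod n :=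
  ∑ i : ZMod n, i * (f i : ZMod n)

/-- The rotation `c`, defined by `(c f) i = f (i+1)`. -/
def rot (n : ℕ) [NeZero n] (f : ZMod n → ℕ) : ZMod n → ℕ := fun i => f (i + 1)

/-- A code is aperiodic (has period `n`) if `c^j f = f` implies `n ∣ j`. -/
def Aperiodic (n : ℕ) [NeZero n] (f : ZMod n → ℕ) : Prop :=
  ∀ j : ℕ, (rot n)^[j] f = f → n ∣ j

/-- The rotation class (orbit under `c`) of a code. -/
def rotOrbit (n : ℕ) [NeZero n] (f : ZMod n → ℕ) : Set (ZMod n → ℕ) :=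
  {g | ∃ j : ℕ, (rot n)^[j] f = g}


/-- The set `F'_{n,k}` of aperiodic `(n,k)`-codes. -/
def aperiodicCodes (n k : ℕ) [NeZero n] : Set (ZMod n → ℕ) :=
  {f | IsCode n k f ∧ Aperiodic n f}

/-- `χ` is a riwi-map on `F'_{n,k}`: a bijection of `F'_{n,k}` which commutes with the
rotation `c` and increases the weighted sum by one. -/
def IsRiwi (n k : ℕ) [NeZero n] (χ : (ZMod n → ℕ) → (ZMod n → ℕ)) : Prop :=
  Set.BijOn χ (aperiodicCodes n k) (aperiodicCodes n k) ∧
  (∀ f ∈ aperiodicCodes n k, χ (rot n f) = rot n (χ f)) ∧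
  (∀ f ∈ aperiodicCodes n k, wsum n (χ f) = wsum n f + 1)

/-- The set `N'_{n,k}` of rotation-classes of aperiodic `(n,k)`-codes. -/
def aperiodicNecklaces (n k : ℕ) [NeZero n] : Set (Set (ZMod n → ℕ)) :=
  {S | ∃ f : ZMod n → ℕ, (IsCode n k f ∧ Aperiodic n f) ∧ S = rotOrbit n f}

section aux
variable {n : ℕ} [NeZero n]

lemma rot_apply_iterate (f : ZMod n → ℕ) (j : ℕ) (i : ZMod n) :
    (rot n)^[j] f i = f (i + j) := by
  induction j generalizing i with
  | zero => simp
  | succ j ih =>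
    rw [Function.iterate_succ_apply']
    show ((rot n)^[j] f) (i + 1) = f (i + (j + 1 : ℕ))
    rw [ih]
    congr 1
    push_cast
    ring

lemma rot_injective : Function.Injective (rot n) := by
  intro f g h
  funext i
  have := congrFun h (i - 1)
  simpa [rot] using this

lemma rot_iterate_nmul (f : ZMod n → ℕ) (m : ℕ) : (rot n)^[n * m] f = f := by
  induction m with
  | zero => simp
  | succ m ih =>
    rw [Nat.mul_succ, Function.iterate_add_apply]
    have hn : (rot n)^[n] f = f := by
      funext i
      rw [rot_apply_iterate]
      simp
    rw [hn, ih]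

lemma rot_iterate_mod (f : ZMod n → ℕ) (j : ℕ) :
    (rot n)^[j] f = (rot n)^[j % n] f := by
  conv_lhs => rw [← Nat.mod_add_div j n, Function.iterate_add_apply, rot_iterate_nmul]

lemma rot_mem {k : ℕ} {f : ZMod n → ℕ} (hf : f ∈ aperiodicCodes n k) :
    rot n f ∈ aperiodicCodes n k := by
  obtain ⟨h1, h2⟩ := hf
  constructor
  · show ∑ i : ZMod n, f (i + 1) = k
    rw [← h1]
    exact Fintype.sum_equiv (Equiv.addRight (1 : ZMod n)) _ _ (fun i => rfl)
  · intro j hj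
    apply h2 j
    apply rot_injective
    calc rot n ((rot n)^[j] f) = (rot n)^[j] (rot n f) := (Function.iterate_succ_apply' _ _ _).symm.trans (Function.iterate_succ_apply _ _ _)
    _ = rot n f := hj

lemma rot_iterate_mem {k : ℕ} {f : ZMod n → ℕ} (hf : f ∈ aperiodicCodes n k) (j : ℕ) :
    (rot n)^[j] f ∈ aperiodicCodes n k := by
  induction j with
  | zero => exact hf
  | succ j ih => rw [Function.iterate_succ_apply']; exact rot_mem ih

lemma rotOrbit_iterate (f : ZMod n → ℕ) (j : ℕ) :
    rotOrbit n ((rot n)^[j] f) = rotOrbit n f := by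
  ext g
  constructor
  · rintro ⟨m, rfl⟩
    exact ⟨m + j, (Function.iterate_add_apply _ _ _ _)⟩
  · rintro ⟨m, rfl⟩
    refine ⟨m + j * (n - 1), ?_⟩
    rw [← Function.iterate_add_apply]
    have hn : n - 1 + 1 = n := Nat.succ_pred_eq_of_pos (Nat.pos_of_ne_zero (NeZero.ne n))
    have harith : m + j * (n - 1) + j = m + j * n := by
      rw [add_assoc, ← Nat.mul_succ, Nat.succ_eq_add_one, hn]
    rw [harith, rot_iterate_mod, Nat.add_mul_mod_self_right, ← rot_iterate_mod]

lemma iterate_inj_of_aperiodic {f : ZMod n → ℕ} (hf : Aperiodic n f)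
    {a b : ℕ} (ha : a < n) (hb : b < n) (hab : (rot n)^[a] f = (rot n)^[b] f) : a = b := by
  have key : ∀ a b : ℕ, a ≤ b → b < n → (rot n)^[a] f = (rot n)^[b] f → a = b := by
    intro a b hle hbn h
    have : (rot n)^[a] ((rot n)^[b - a] f) = (rot n)^[a] f := by
      rw [← Function.iterate_add_apply, Nat.add_sub_cancel' hle, h]
    have h2 : (rot n)^[b - a] f = f := (rot_injective.iterate a) this
    have hd := hf _ h2
    have hba : b - a = 0 := by
      by_contra hne
      have := Nat.le_of_dvd (Nat.pos_of_ne_zero hne) hd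
      omega
    omega
  rcases le_total a b with h | h
  · exact key a b h hb hab
  · exact (key b a h ha hab.symm).symm

end aux

/-- If there exists a riwi-map on `F'_{n,k}`, then there is a bijection between
`F'_{n,k,0}`, the aperiodic `(n,k)`-codes with weighted sum `0`, and `N'_{n,k}`,
the rotation-classes of aperiodic `(n,k)`-codes. -/

theorem riwi_gives_bijection (n k : ℕ) [NeZero n] (hk : 0 < k)
    (χ : (ZMod n → ℕ) → (ZMod n → ℕ)) (hχ : IsRiwi n k χ) :
    Nonempty
      ({f : ZMod n → ℕ // IsCode n k f ∧ Aperiodic n f ∧ wsum n f = 0} ≃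
        aperiodicNecklaces n k) := by
  classical
  obtain ⟨hbij, hcomm, hw⟩ := hχ
  have hnpos : 0 < n := Nat.pos_of_ne_zero (NeZero.ne n)
  have hAfin : (aperiodicCodes n k).Finite := by
    apply Set.Finite.subset (Set.Finite.pi (fun _ : ZMod n => Set.finite_Iic k))
    intro f hf
    simp only [Set.mem_pi, Set.mem_univ, Set.mem_Iic, forall_true_left]
    intro i
    have h1 := hf.1
    rw [← h1]
    exact Finset.single_le_sum (fun i _ => Nat.zero_le _) (Finset.mem_univ i)
  set T := hAfin.toFinset with hT
  have hmemT : ∀ f, f ∈ T ↔ f ∈ aperiodicCodes n k := fun f => hAfin.mem_toFinset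
  set B : ZMod n → Finset (ZMod n → ℕ) := fun t => T.filter (fun f => wsum n f = t) with hB
  have hmono : ∀ t : ZMod n, (B t).card ≤ (B (t + 1)).card := by
    intro t
    apply Finset.card_le_card_of_injOn χ
    · intro f hf
      simp only [hB, Finset.mem_coe, Finset.mem_filter, hmemT] at hf ⊢
      exact ⟨hbij.mapsTo hf.1, by rw [hw f hf.1, hf.2]⟩
    · intro a ha b hb hab
      simp only [hB, Finset.coe_filter, Set.mem_setOf_eq, Finset.mem_coe, hmemT] at ha hb
      exact hbij.injOn ha.1 hb.1 hab
  have hstep : ∀ (t : ZMod n) (m : ℕ), (B t).card ≤ (B (t + m)).card := by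
    intro t m
    induction m with
    | zero => simp
    | succ m ih =>
      have hcast : (((m + 1 : ℕ)) : ZMod n) = (m : ZMod n) + 1 := by push_cast; ring
      rw [hcast, ← add_assoc]
      exact ih.trans (hmono (t + m))
  have hall : ∀ t : ZMod n, (B t).card = (B 0).card := by
    intro t
    have h1 : (B 0).card ≤ (B t).card := by
      have h := hstep 0 t.val
      rwa [zero_add, ZMod.natCast_val, ZMod.cast_id] at h
    have h2 : (B t).card ≤ (B 0).card := by
      have h := hstep t (n - t.val)
      have hv : ((n - t.val : ℕ) : ZMod n) = -t := by
        rw [Nat.cast_sub (le_of_lt (ZMod.val_lt t)), ZMod.natCast_self, ZMod.natCast_val,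
          ZMod.cast_id, zero_sub]
      rwa [hv, add_neg_cancel] at h
    exact le_antisymm h2 h1
  have hsum : T.card = ∑ t : ZMod n, (B t).card :=
    Finset.card_eq_sum_card_fiberwise (fun f _ => Finset.mem_univ _)
  have hcard1 : T.card = n * (B 0).card := by
    rw [hsum, Finset.sum_congr rfl (fun t _ => hall t), Finset.sum_const, smul_eq_mul,
      Finset.card_univ, ZMod.card]
  have hNfin : (aperiodicNecklaces n k).Finite := by
    have himg : aperiodicNecklaces n k = rotOrbit n '' (aperiodicCodes n k) := by
      ext S
      constructor
      · rintro ⟨f, hf, rfl⟩; exact ⟨f, hf, rfl⟩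
      · rintro ⟨f, hf, rfl⟩; exact ⟨f, hf, rfl⟩
    rw [himg]
    exact hAfin.image _
  set NT := hNfin.toFinset with hNT
  have hmemNT : ∀ S, S ∈ NT ↔ S ∈ aperiodicNecklaces n k := fun S => hNfin.mem_toFinset
  have hsum2 : T.card = ∑ S ∈ NT, (T.filter (fun g => rotOrbit n g = S)).card := by
    apply Finset.card_eq_sum_card_fiberwise
    intro f hf
    rw [Finset.mem_coe, hmemNT]
    exact ⟨f, (hmemT f).1 hf, rfl⟩
  have hfiber : ∀ S ∈ NT, (T.filter (fun g => rotOrbit n g = S)).card = n := by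
    intro S hS
    rw [hmemNT] at hS
    obtain ⟨f, hf, rfl⟩ := hS
    have himg : T.filter (fun g => rotOrbit n g = rotOrbit n f)
        = Finset.image (fun j : Fin n => (rot n)^[j.val] f) Finset.univ := by
      ext g
      simp only [Finset.mem_filter, Finset.mem_image, Finset.mem_univ, true_and, hmemT]
      constructor
      · rintro ⟨hgA, horb⟩
        have hg : g ∈ rotOrbit n f := by
          rw [← horb]; exact ⟨0, rfl⟩
        obtain ⟨j, rfl⟩ := hg
        exact ⟨⟨j % n, Nat.mod_lt _ hnpos⟩, (rot_iterate_mod f j).symm⟩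
      · rintro ⟨j, rfl⟩
        exact ⟨rot_iterate_mem hf j.val, rotOrbit_iterate f j.val⟩
    rw [himg, Finset.card_image_of_injOn, Finset.card_univ, Fintype.card_fin]
    intro a _ b _ hab
    exact Fin.ext (iterate_inj_of_aperiodic hf.2 a.isLt b.isLt hab)
  have hcard2 : T.card = NT.card * n := by
    rw [hsum2, Finset.sum_congr rfl hfiber, Finset.sum_const, smul_eq_mul]
  have hmain : (B 0).card = NT.card := by
    have : n * (B 0).card = n * NT.card := by rw [← hcard1, hcard2, mul_comm]
    exact Nat.eq_of_mul_eq_mul_left hnpos this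
  have e1 : {f : ZMod n → ℕ // IsCode n k f ∧ Aperiodic n f ∧ wsum n f = 0}
      ≃ {f // f ∈ B 0} :=
    Equiv.subtypeEquivRight (by
      intro f
      simp only [hB, Finset.mem_filter, hmemT, aperiodicCodes, Set.mem_setOf_eq]
      tauto)
  have e2 : {S // S ∈ NT} ≃ aperiodicNecklaces n k :=
    Equiv.subtypeEquivRight (fun S => hmemNT S)
  have hc : Fintype.card {f // f ∈ B 0} = Fintype.card {S // S ∈ NT} := by
    rw [Fintype.card_coe, Fintype.card_coe, hmain]
  obtain ⟨e⟩ := Fintype.card_eq.mp hc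
  exact ⟨e1.trans (e.trans e2)⟩
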